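/- Let R be a (left) nearfield which is not distributive, i.e. there exist α, β, λ ∈ R with (α+β)·λ ≠ α·λ + β·λ, and let n be a positive integer. The collection of all subspaces of R^n has exactly 2^n elements. -/

import Mathlib

/-- A (left) nearfield: `(R,+)` is an abelian group, multiplication is associative
with identity `1 ≠ 0`, every nonzero element has a two-sided inverse,
`0` multiplies to `0` on both sides, and the left distributive law holds. -/
class Nearfield (R : Type*) extends AddCommGroup R, One R, Mul R where
  mul_assoc : ∀ a b c : R, a * b * c = a * (b * c)
  one_mul : ∀ a : R, 1 * a = a
  mul_one : ∀ a : R, a * 1 = a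
  one_ne_zero : (1 : R) ≠ 0
  zero_mul : ∀ a : R, 0 * a = 0
  mul_zero : ∀ a : R, a * 0 = 0
  left_distrib : ∀ a b c : R, a * (b + c) = a * b + a * c
  exists_inv : ∀ a : R, a ≠ 0 → ∃ b : R, a * b = 1 ∧ b * a = 1

variable {R : Type*} [Nearfield R] {n : ℕ}

/-- Right scalar multiplication on `R^n`: `(x · r) j = x j * r`. -/
def vsmul (x : Fin n → R) (r : R) : Fin n → R := fun j => x j * r

/-- An `R`-subgroup of `R^n`: an additive subgroup closed under right scalar
multiplication. -/
def IsRSubgroup (S : Set (Fin n → R)) : Prop :=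
  (0 : Fin n → R) ∈ S ∧ (∀ x ∈ S, ∀ y ∈ S, x + y ∈ S) ∧ (∀ x ∈ S, -x ∈ S) ∧
    ∀ x ∈ S, ∀ r : R, vsmul x r ∈ S

/-- `nvGen V` is the smallest `R`-subgroup of `R^n` containing `V`
(the intersection of all `R`-subgroups containing `V`). -/
def nvGen (V : Set (Fin n → R)) : Set (Fin n → R) :=
  { x | ∀ S : Set (Fin n → R), IsRSubgroup S → V ⊆ S → x ∈ S }

/-- A subspace of `R^n`: an additive subgroup `N` with `(x+y)·r − x·r ∈ N`
for all `x ∈ R^n`, `y ∈ N`, `r ∈ R`. -/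
def IsSubspace (N : Set (Fin n → R)) : Prop :=
  (0 : Fin n → R) ∈ N ∧ (∀ x ∈ N, ∀ y ∈ N, x + y ∈ N) ∧ (∀ x ∈ N, -x ∈ N) ∧
    ∀ x : Fin n → R, ∀ y ∈ N, ∀ r : R, vsmul (x + y) r - vsmul x r ∈ N

/-- `nvSpan V` is the smallest subspace of `R^n` containing `V`. -/
def nvSpan (V : Set (Fin n → R)) : Set (Fin n → R) :=
  { x | ∀ N : Set (Fin n → R), IsSubspace N → V ⊆ N → x ∈ N }

/-- `nvLC V 0 = V` and `nvLC V (m+1)` is the set of all finite right `R`-linear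
combinations of elements of `nvLC V m`. -/
def nvLC (V : Set (Fin n → R)) : ℕ → Set (Fin n → R)
  | 0 => V
  | m + 1 => { x | ∃ F : Finset (Fin n → R), ↑F ⊆ nvLC V m ∧
      ∃ lam : (Fin n → R) → R, x = ∑ w ∈ F, vsmul w (lam w) }

-- aux
lemma NF.smul_mem {N : Set (Fin n → R)} (hN : IsSubspace N) {y : Fin n → R} (hy : y ∈ N) (r : R) :
    vsmul y r ∈ N := by
  have h := hN.2.2.2 0 y hy r
  have e : vsmul ((0 : Fin n → R) + y) r - vsmul 0 r = vsmul y r := by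
    funext i
    simp [vsmul, Nearfield.zero_mul]
  rwa [e] at h

def NF.single (j : Fin n) (r : R) : Fin n → R := fun i => if i = j then r else 0

lemma NF.sum_mem {N : Set (Fin n → R)} (hN : IsSubspace N) {ι : Type*} [DecidableEq ι]
    (F : Finset ι) (f : ι → Fin n → R) (hf : ∀ i ∈ F, f i ∈ N) : ∑ i ∈ F, f i ∈ N := by
  induction F using Finset.induction with
  | empty => simpa using hN.1
  | insert _ _ hx ih =>
    rw [Finset.sum_insert hx]
    exact hN.2.1 _ (hf _ (Finset.mem_insert_self _ _)) _
      (ih fun i hi => hf i (Finset.mem_insert_of_mem hi))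

lemma NF.single_mem {N : Set (Fin n → R)} (hN : IsSubspace N)
    (hd : ∃ α β lam : R, (α + β) * lam ≠ α * lam + β * lam)
    {v : Fin n → R} (hv : v ∈ N) {j : Fin n} (hvj : v j ≠ 0) (r : R) :
    NF.single j r ∈ N := by
  classical
  obtain ⟨α, β, lam, hlam⟩ := hd
  obtain ⟨u, hu1, hu2⟩ := Nearfield.exists_inv (v j) hvj
  -- v' has j-th coordinate β
  set v' : Fin n → R := vsmul v (u * β) with hv'
  have hv'N : v' ∈ N := NF.smul_mem hN hv _
  have hv'j : v' j = β := by
    simp only [hv', vsmul]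
    rw [← Nearfield.mul_assoc, hu1, Nearfield.one_mul]
  set x : Fin n → R := NF.single j α with hx
  have hw1 : vsmul (x + v') lam - vsmul x lam ∈ N := hN.2.2.2 x v' hv'N lam
  have hw2 : vsmul v' lam ∈ N := NF.smul_mem hN hv'N lam
  set w : Fin n → R := vsmul (x + v') lam - vsmul x lam - vsmul v' lam with hwdef
  have hwN : w ∈ N := by
    rw [hwdef, sub_eq_add_neg _ (vsmul v' lam)]
    exact hN.2.1 _ hw1 _ (hN.2.2.1 _ hw2)
  have hwi : ∀ i, i ≠ j → w i = 0 := by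
    intro i hij
    simp only [hwdef, hx, NF.single, Pi.sub_apply, Pi.add_apply, vsmul, if_neg hij]
    rw [Nearfield.zero_mul, zero_add, sub_zero, sub_self]
  have hwj : w j ≠ 0 := by
    simp only [hwdef, hx, NF.single, Pi.sub_apply, Pi.add_apply, vsmul, if_pos rfl, hv'j,
      if_true]
    intro hcon
    apply hlam
    have := sub_eq_zero.mp (by rwa [sub_sub] at hcon)
    rw [this]
  obtain ⟨c, hc1, hc2⟩ := Nearfield.exists_inv (w j) hwj
  have : NF.single j r = vsmul w (c * r) := by
    funext i
    by_cases hij : i = j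
    · subst hij
      simp only [NF.single, if_pos rfl, vsmul, if_true]
      rw [← Nearfield.mul_assoc, hc1, Nearfield.one_mul]
    · simp only [NF.single, if_neg hij, vsmul, hwi i hij, Nearfield.zero_mul]
  rw [this]
  exact NF.smul_mem hN hwN _

lemma NF.subspace_eq {N : Set (Fin n → R)} (hN : IsSubspace N)
    (hd : ∃ α β lam : R, (α + β) * lam ≠ α * lam + β * lam) :
    N = {x : Fin n → R | ∀ j, j ∉ {j : Fin n | ∃ v ∈ N, v j ≠ 0} → x j = 0} := by
  classical
  ext x
  constructor
  · intro hx j hj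
    by_contra h
    exact hj ⟨x, hx, h⟩
  · intro hx
    have : x = ∑ j : Fin n, NF.single j (x j) := by
      funext i
      rw [Finset.sum_apply]
      simp [NF.single]
    rw [this]
    apply NF.sum_mem hN
    intro j _
    by_cases hj : j ∈ {j : Fin n | ∃ v ∈ N, v j ≠ 0}
    · obtain ⟨v, hv, hvj⟩ := hj
      exact NF.single_mem hN hd hv hvj _
    · have : x j = 0 := hx j hj
      rw [this]
      have : NF.single (R := R) (n := n) j 0 = 0 := by
        funext i; simp [NF.single]
      rw [this]
      exact hN.1

lemma NF.coord_subspace (A : Set (Fin n)) :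
    IsSubspace {x : Fin n → R | ∀ j, j ∉ A → x j = 0} := by
  classical
  refine ⟨fun j _ => rfl, ?_, ?_, ?_⟩
  · intro x hx y hy j hj
    simp [Pi.add_apply, hx j hj, hy j hj]
  · intro x hx j hj
    simp [Pi.neg_apply, hx j hj]
  · intro x y hy r j hj
    simp only [Pi.sub_apply, Pi.add_apply, vsmul, hy j hj, add_zero, sub_self]

lemma NF.single_one_mem_iff (A : Set (Fin n)) (j : Fin n) :
    NF.single (R := R) j 1 ∈ {x : Fin n → R | ∀ i, i ∉ A → x i = 0} ↔ j ∈ A := by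
  classical
  constructor
  · intro h
    by_contra hj
    have := h j hj
    simp only [NF.single, if_pos rfl, if_true] at this
    exact Nearfield.one_ne_zero this
  · intro hj i hi
    have : i ≠ j := fun h => hi (h ▸ hj)
    simp [NF.single, this]


/-- in a non-distributive nearfield, `R^n` has exactly `2^n`
subspaces. -/
theorem card_subspaces
    (hd : ∃ α β lam : R, (α + β) * lam ≠ α * lam + β * lam)
    (hn : 0 < n) :
    { N : Set (Fin n → R) | IsSubspace N }.ncard = 2 ^ n := by
  classical
  have key : {N : Set (Fin n → R) | IsSubspace N} =
      Set.range (fun A : Set (Fin n) => {x : Fin n → R | ∀ j, j ∉ A → x j = 0}) := by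
    ext N
    constructor
    · intro hN
      exact ⟨{j | ∃ v ∈ N, v j ≠ 0}, (NF.subspace_eq hN hd).symm⟩
    · rintro ⟨A, rfl⟩
      exact NF.coord_subspace A
  have hinj : Function.Injective
      (fun A : Set (Fin n) => {x : Fin n → R | ∀ j, j ∉ A → x j = 0}) := by
    intro A B hAB
    ext j
    rw [← NF.single_one_mem_iff (R := R) A j, ← NF.single_one_mem_iff (R := R) B j]
    simp only at hAB
    rw [hAB]
  rw [key, ← Set.image_univ, Set.ncard_image_of_injective _ hinj, Set.ncard_univ,
    Nat.card_eq_fintype_card, Fintype.card_set, Fintype.card_fin]
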